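/- Let n ≥ 1 and let A, φ₁, φ₂ : ℝ → M_n(ℂ) be differentiable matrix-valued functions satisfying Schmid's equations: A′(t) = [φ₁(t), φ₂(t)], φ₁′(t) = [A(t), φ₂(t)], φ₂′(t) = [φ₁(t), A(t)] for all t, where [X,Y] = XY − YX. Fix ζ ∈ ℂ and define α(t) = (φ₁(t) + i φ₂(t)) + 2ζ A(t) + ζ² (φ₁(t) − i φ₂(t)) and β(t) = i A(t) + i ζ (φ₁(t) − i φ₂(t)). Then α satisfies the Lax equation α′(t) = [α(t), β(t)] for all t ∈ ℝ. -/

import Mathlib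

/-- The Lax matrix `α(ζ) = (φ₁ + iφ₂) + 2ζA + ζ²(φ₁ − iφ₂)` built from a solution of
Schmid's equations. -/
noncomputable def schmidLaxAlpha {n : ℕ} (ζ : ℂ)
    (A φ₁ φ₂ : ℝ → Matrix (Fin n) (Fin n) ℂ) (t : ℝ) : Matrix (Fin n) (Fin n) ℂ :=
  (φ₁ t + Complex.I • φ₂ t) + (2 * ζ) • A t + ζ ^ 2 • (φ₁ t - Complex.I • φ₂ t)

/-- The matrix `β(ζ) = iA + iζ(φ₁ − iφ₂)` built from a solution of Schmid's equations. -/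
noncomputable def schmidLaxBeta {n : ℕ} (ζ : ℂ)
    (A φ₁ φ₂ : ℝ → Matrix (Fin n) (Fin n) ℂ) (t : ℝ) : Matrix (Fin n) (Fin n) ℂ :=
  Complex.I • A t + (Complex.I * ζ) • (φ₁ t - Complex.I • φ₂ t)

lemma schmid_key {n : ℕ} (ζ : ℂ) (A P Q : Matrix (Fin n) (Fin n) ℂ) :
    ((P + Complex.I • Q) + (2 * ζ) • A + ζ ^ 2 • (P - Complex.I • Q)) *
      (Complex.I • A + (Complex.I * ζ) • (P - Complex.I • Q)) -
    (Complex.I • A + (Complex.I * ζ) • (P - Complex.I • Q)) *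
      ((P + Complex.I • Q) + (2 * ζ) • A + ζ ^ 2 • (P - Complex.I • Q)) =
    ((A * Q - Q * A) + Complex.I • (P * A - A * P)) +
      (2 * ζ) • (P * Q - Q * P) +
      ζ ^ 2 • ((A * Q - Q * A) - Complex.I • (P * A - A * P)) := by
  simp only [mul_add, add_mul, sub_mul, mul_sub, smul_mul_assoc, mul_smul_comm,
    smul_smul, smul_add, smul_sub]
  ring_nf
  simp only [Complex.I_sq, pow_succ, pow_zero, one_mul, Complex.I_mul_I]
  ring_nf
  module

/-- If `A, φ₁, φ₂ : ℝ → Mₙ(ℂ)` satisfy Schmid's equations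
`A′ = [φ₁, φ₂]`, `φ₁′ = [A, φ₂]`, `φ₂′ = [φ₁, A]`, then for any spectral parameter `ζ ∈ ℂ`
the matrix `α = (φ₁ + iφ₂) + 2ζA + ζ²(φ₁ − iφ₂)` satisfies the Lax equation `α′ = [α, β]`
with `β = iA + iζ(φ₁ − iφ₂)`. -/
theorem schmid_to_lax
    {n : ℕ} (hn : 1 ≤ n) (ζ : ℂ)
    (A φ₁ φ₂ : ℝ → Matrix (Fin n) (Fin n) ℂ)
    (hA : ∀ (t : ℝ) (i j : Fin n),
      HasDerivAt (fun s => A s i j) ((φ₁ t * φ₂ t - φ₂ t * φ₁ t) i j) t)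
    (hφ₁ : ∀ (t : ℝ) (i j : Fin n),
      HasDerivAt (fun s => φ₁ s i j) ((A t * φ₂ t - φ₂ t * A t) i j) t)
    (hφ₂ : ∀ (t : ℝ) (i j : Fin n),
      HasDerivAt (fun s => φ₂ s i j) ((φ₁ t * A t - A t * φ₁ t) i j) t) :
    ∀ (t : ℝ) (i j : Fin n),
      HasDerivAt (fun s => schmidLaxAlpha ζ A φ₁ φ₂ s i j)
        ((schmidLaxAlpha ζ A φ₁ φ₂ t * schmidLaxBeta ζ A φ₁ φ₂ t -
          schmidLaxBeta ζ A φ₁ φ₂ t * schmidLaxAlpha ζ A φ₁ φ₂ t) i j) t := by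
  intro t i j
  have key := schmid_key ζ (A t) (φ₁ t) (φ₂ t)
  rw [show schmidLaxAlpha ζ A φ₁ φ₂ t * schmidLaxBeta ζ A φ₁ φ₂ t -
      schmidLaxBeta ζ A φ₁ φ₂ t * schmidLaxAlpha ζ A φ₁ φ₂ t =
      ((A t * φ₂ t - φ₂ t * A t) + Complex.I • (φ₁ t * A t - A t * φ₁ t)) +
        (2 * ζ) • (φ₁ t * φ₂ t - φ₂ t * φ₁ t) +
        ζ ^ 2 • ((A t * φ₂ t - φ₂ t * A t) - Complex.I • (φ₁ t * A t - A t * φ₁ t)) from by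
    simpa [schmidLaxAlpha, schmidLaxBeta] using key]
  have h := (((hφ₁ t i j).add ((hφ₂ t i j).const_mul Complex.I)).add
      ((hA t i j).const_mul (2 * ζ))).add
      (((hφ₁ t i j).sub ((hφ₂ t i j).const_mul Complex.I)).const_mul (ζ ^ 2))
  convert h using 2 with s
  case e'_4 => rfl
  all_goals simp only [schmidLaxAlpha, Matrix.add_apply, Matrix.smul_apply,
    Matrix.sub_apply, smul_eq_mul, Pi.add_apply, Pi.sub_apply]
  all_goals ring
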